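/- arXiv:1902.07885 — 2 statements merged into one kernel-verified Lean document; each statement's English description precedes it below -/
import Mathlib

section
/- Let 1 → N → G → H → 1 be an exact sequence of finitely generated groups where H is a finite ℓ-group and the pro-ℓ completion N^ℓ of N has trivial centre. Then the induced sequence of pro-ℓ completions 1 → N^ℓ → G^ℓ → H^ℓ → 1 is exact. -/
/-- The index set for the pro-`ℓ` completion of `G`: normal subgroups `K ⊆ G` such that
`G/K` is a finite `ℓ`-group. -/
def LIndex (G : Type*) [Group G] (ℓ : ℕ) : Type _ :=
  {K : Subgroup G // K.Normal ∧ Finite (G ⧸ K) ∧ ∃ n : ℕ, Nat.card (G ⧸ K) = ℓ ^ n}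

instance LIndex.group {G : Type*} [Group G] {ℓ : ℕ} (K : LIndex G ℓ) : Group (G ⧸ K.1) :=
  haveI := K.2.1
  inferInstance

instance LIndex.finite {G : Type*} [Group G] {ℓ : ℕ} (K : LIndex G ℓ) : Finite (G ⧸ K.1) :=
  K.2.2.1

/-- Each finite quotient carries the discrete topology. -/
instance LIndex.topologicalSpace {G : Type*} [Group G] {ℓ : ℕ} (K : LIndex G ℓ) :
    TopologicalSpace (G ⧸ K.1) := ⊥

/-- The transition maps `G/K₁ → G/K₂` for `K₁ ≤ K₂`. -/
def LIndex.transition {G : Type*} [Group G] {ℓ : ℕ} (K₁ K₂ : LIndex G ℓ) (h : K₁.1 ≤ K₂.1) :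
    (G ⧸ K₁.1) →* (G ⧸ K₂.1) :=
  haveI := K₁.2.1
  haveI := K₂.2.1
  QuotientGroup.map K₁.1 K₂.1 (MonoidHom.id G) fun _ hx => h hx

/-- The pro-`ℓ` completion `G^ℓ` of `G`: the inverse limit of the quotients `G/K` over all
normal subgroups `K` with `G/K` a finite `ℓ`-group, realized as the subgroup of compatible
families in `∏ G/K`. -/
def proLSubgroup (G : Type*) [Group G] (ℓ : ℕ) : Subgroup (∀ K : LIndex G ℓ, G ⧸ K.1) where
  carrier := {f | ∀ (K₁ K₂ : LIndex G ℓ) (h : K₁.1 ≤ K₂.1),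
    LIndex.transition K₁ K₂ h (f K₁) = f K₂}
  one_mem' := by intro K₁ K₂ h; exact map_one _
  mul_mem' := by
    intro a b ha hb K₁ K₂ h
    simp only [Pi.mul_apply, map_mul, ha K₁ K₂ h, hb K₁ K₂ h]
  inv_mem' := by
    intro a ha K₁ K₂ h
    simp only [Pi.inv_apply, map_inv, ha K₁ K₂ h]

/-- The pro-`ℓ` completion of `G`, as a (topological) group. -/
abbrev ProL (G : Type*) [Group G] (ℓ : ℕ) : Type _ := ↥(proLSubgroup G ℓ)

/-- Functoriality of the pro-`ℓ` completion: indices pull back. -/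
def LIndex.comap {A B : Type*} [Group A] [Group B] {ℓ : ℕ} (hℓ : ℓ.Prime)
    (φ : A →* B) (K : LIndex B ℓ) : LIndex A ℓ :=
  ⟨K.1.comap φ, by
    haveI := K.2.1
    haveI : Finite (B ⧸ K.1) := K.2.2.1
    have hker : K.1.comap φ = ((QuotientGroup.mk' K.1).comp φ).ker := by
      rw [← MonoidHom.comap_ker, QuotientGroup.ker_mk']
    refine ⟨inferInstance, ?_, ?_⟩
    · rw [hker]
      exact Finite.of_equiv _ (QuotientGroup.quotientKerEquivRange _).symm.toEquiv
    · obtain ⟨n, hn⟩ := K.2.2.2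
      have hdvd : Nat.card (A ⧸ K.1.comap φ) ∣ ℓ ^ n := by
        rw [hker, ← hn,
          Nat.card_congr (QuotientGroup.quotientKerEquivRange _).toEquiv]
        exact Subgroup.card_subgroup_dvd_card _
      obtain ⟨m, -, hm⟩ := (Nat.dvd_prime_pow hℓ).mp hdvd
      exact ⟨m, hm⟩⟩

/-- Functoriality of the pro-`ℓ` completion: a homomorphism `φ : A → B` induces a
(continuous) homomorphism `A^ℓ → B^ℓ`. -/
def proLMap {A B : Type*} [Group A] [Group B] {ℓ : ℕ} (hℓ : ℓ.Prime) (φ : A →* B) :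
    ProL A ℓ →* ProL B ℓ where
  toFun x := ⟨fun K =>
      (haveI := (LIndex.comap hℓ φ K).2.1
       haveI := K.2.1
       QuotientGroup.map ((LIndex.comap hℓ φ K).1) K.1 φ le_rfl :
        A ⧸ (LIndex.comap hℓ φ K).1 →* B ⧸ K.1) (x.1 (LIndex.comap hℓ φ K)), by
    intro K₁ K₂ h
    haveI := (LIndex.comap hℓ φ K₁).2.1
    haveI := (LIndex.comap hℓ φ K₂).2.1
    haveI := K₁.2.1
    haveI := K₂.2.1
    have hc : (LIndex.comap hℓ φ K₁).1 ≤ (LIndex.comap hℓ φ K₂).1 := Subgroup.comap_mono h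
    have h2 := x.2 _ _ hc
    obtain ⟨a, ha⟩ := QuotientGroup.mk'_surjective _ (x.1 (LIndex.comap hℓ φ K₁))
    beta_reduce
    rw [← h2, ← ha]
    rfl⟩
  map_one' := by
    ext K
    exact map_one _
  map_mul' := by
    intro x y
    ext K
    exact map_mul _ _ _

section Helpers

variable {ℓ : ℕ}

/-- The intersection of two indices is an index. -/
def LIndex.inf {G : Type*} [Group G] (hℓ : ℓ.Prime) (K₁ K₂ : LIndex G ℓ) : LIndex G ℓ :=
  ⟨K₁.1 ⊓ K₂.1, by
  haveI := Fact.mk hℓ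
  haveI := K₁.2.1
  haveI := K₂.2.1
  have hn : (K₁.1 ⊓ K₂.1).Normal :=
    ⟨fun x hx g => Subgroup.mem_inf.mpr
      ⟨K₁.2.1.conj_mem x (Subgroup.mem_inf.mp hx).1 g,
       K₂.2.1.conj_mem x (Subgroup.mem_inf.mp hx).2 g⟩⟩
  haveI := hn
  let φ : G ⧸ (K₁.1 ⊓ K₂.1) →* (G ⧸ K₁.1) × (G ⧸ K₂.1) :=
    MonoidHom.prod
      (QuotientGroup.map _ _ (MonoidHom.id G) (fun x hx => (Subgroup.mem_inf.mp hx).1))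
      (QuotientGroup.map _ _ (MonoidHom.id G) (fun x hx => (Subgroup.mem_inf.mp hx).2))
  have hφ : Function.Injective φ := by
    refine (injective_iff_map_eq_one φ).mpr ?_
    intro q hq
    obtain ⟨g, rfl⟩ := QuotientGroup.mk_surjective q
    have h1 : ((g : G ⧸ K₁.1), (g : G ⧸ K₂.1)) = (1 : (G ⧸ K₁.1) × (G ⧸ K₂.1)) := hq
    rw [Prod.ext_iff] at h1
    refine (QuotientGroup.eq_one_iff g).mpr (Subgroup.mem_inf.mpr
      ⟨(QuotientGroup.eq_one_iff g).mp h1.1, (QuotientGroup.eq_one_iff g).mp h1.2⟩)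
  haveI : Finite (G ⧸ (K₁.1 ⊓ K₂.1)) := Finite.of_injective φ hφ
  have hcard : ∃ k, Nat.card (G ⧸ (K₁.1 ⊓ K₂.1)) = ℓ ^ k := by
    obtain ⟨a, ha⟩ := K₁.2.2.2
    obtain ⟨b, hb⟩ := K₂.2.2.2
    have hprod : IsPGroup ℓ ((G ⧸ K₁.1) × (G ⧸ K₂.1)) :=
      IsPGroup.of_card (n := a + b) (by rw [Nat.card_prod, ha, hb, pow_add])
    exact IsPGroup.iff_card.mp (hprod.of_injective φ hφ)
  exact ⟨hn, inferInstance, hcard⟩⟩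

theorem LIndex.inf_coe {G : Type*} [Group G] (hℓ : ℓ.Prime) (K₁ K₂ : LIndex G ℓ) :
    (LIndex.inf hℓ K₁ K₂).1 = K₁.1 ⊓ K₂.1 := rfl

/-- Key cofinality lemma: every index of `N` is refined by (the pullback of) an index
of `G`. -/
theorem exists_lindex_comap_le {n : ℕ} (hℓ : ℓ.Prime)
    {N G H : Type*} [Group N] [Group G] [Group H]
    (i : N →* G) (π : G →* H) (hi : Function.Injective i) (hπ : Function.Surjective π)
    (hexact : i.range = π.ker) [Finite H] (hH : Nat.card H = ℓ ^ n)
    (K : LIndex N ℓ) : ∃ K' : LIndex G ℓ, K'.1.comap i ≤ K.1 := by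
  haveI := Fact.mk hℓ
  haveI := K.2.1
  obtain ⟨m, hm⟩ := K.2.2.2
  set J : Subgroup G := K.1.map i with hJ
  set L : Subgroup G := J.normalCore with hLdef
  have hLJ : L ≤ J := J.normalCore_le
  haveI hLn : L.Normal := Subgroup.normalCore_normal J
  have hmemM : ∀ g : G, g ∈ π.ker ↔ g ∈ i.range := by rw [hexact]; exact fun _ => Iff.rfl
  have hJM : J ≤ π.ker := by
    rintro g ⟨a, _, rfl⟩
    exact (hmemM (i a)).mpr ⟨a, rfl⟩
  -- `π.ker` has finite index
  haveI hfin1 : Finite (G ⧸ π.ker) :=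
    Finite.of_equiv _ (QuotientGroup.quotientKerEquivOfSurjective π hπ).symm.toEquiv
  -- `J` has finite index: the coset space `π.ker ⧸ J.subgroupOf π.ker` is a surjective
  -- image of `N ⧸ K`.
  have hfin2 : Finite ((π.ker : Subgroup G) ⧸ J.subgroupOf π.ker) := by
    haveI : Finite (N ⧸ K.1) := K.2.2.1
    let f : N → (π.ker : Subgroup G) ⧸ J.subgroupOf π.ker :=
      fun a => QuotientGroup.mk ⟨i a, (hmemM (i a)).mpr ⟨a, rfl⟩⟩
    have hresp : ∀ a b : N, (QuotientGroup.leftRel K.1) a b → f a = f b := by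
      intro a b hab
      have hab' : a⁻¹ * b ∈ K.1 := QuotientGroup.leftRel_apply.mp hab
      refine Quotient.sound' (QuotientGroup.leftRel_apply.mpr ?_)
      show (⟨i a, _⟩ : π.ker)⁻¹ * ⟨i b, _⟩ ∈ J.subgroupOf π.ker
      rw [Subgroup.mem_subgroupOf]
      show (i a)⁻¹ * i b ∈ J
      rw [← map_inv, ← map_mul]
      exact ⟨a⁻¹ * b, hab', rfl⟩
    let F : N ⧸ K.1 → (π.ker : Subgroup G) ⧸ J.subgroupOf π.ker :=
      Quotient.lift f hresp
    have hFsurj : Function.Surjective F := by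
      intro q
      obtain ⟨⟨g, hg⟩, rfl⟩ := QuotientGroup.mk_surjective q
      obtain ⟨a, rfl⟩ := (hmemM g).mp hg
      exact ⟨QuotientGroup.mk a, rfl⟩
    exact Finite.of_surjective F hFsurj
  haveI : J.FiniteIndex := by
    constructor
    rw [← Subgroup.relIndex_mul_index hJM]
    exact Nat.mul_ne_zero Subgroup.index_ne_zero_of_finite Subgroup.index_ne_zero_of_finite
  haveI : L.FiniteIndex := Subgroup.finiteIndex_normalCore J
  haveI hfinL : Finite (G ⧸ L) := by
    have := Subgroup.FiniteIndex.index_ne_zero (H := L)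
    rw [Subgroup.index_eq_card] at this
    exact Nat.finite_of_card_ne_zero this
  have hP : IsPGroup ℓ (G ⧸ L) := by
    intro q
    obtain ⟨g, rfl⟩ := QuotientGroup.mk_surjective q
    refine ⟨n + m, ?_⟩
    rw [show ((g : G ⧸ L)) ^ ℓ ^ (n + m) = ((g ^ ℓ ^ (n + m) : G) : G ⧸ L) from
      (map_pow (QuotientGroup.mk' L) g _).symm, QuotientGroup.eq_one_iff]
    show ∀ b : G, b * g ^ ℓ ^ (n + m) * b⁻¹ ∈ J
    intro b
    have h1 : π (b * g ^ ℓ ^ n * b⁻¹) = 1 := by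
      have : π (g ^ ℓ ^ n) = (π g) ^ ℓ ^ n := map_pow π g _
      have h2 : (π g) ^ ℓ ^ n = 1 := by rw [← hH]; exact pow_card_eq_one'
      simp [map_mul, map_pow, h2]
    obtain ⟨a, ha⟩ : b * g ^ ℓ ^ n * b⁻¹ ∈ i.range := (hmemM _).mp (MonoidHom.mem_ker.mpr h1)
    have conjpow : ∀ (x : G) (e : ℕ), (b * x * b⁻¹) ^ e = b * x ^ e * b⁻¹ := by
      intro x e
      induction e with
      | zero => simp
      | succ e ih => rw [pow_succ, pow_succ, ih]; group
    have key : b * g ^ ℓ ^ (n + m) * b⁻¹ = (b * g ^ ℓ ^ n * b⁻¹) ^ ℓ ^ m := by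
      rw [conjpow, ← pow_mul, ← pow_add]
    rw [key, ← ha, ← map_pow]
    refine ⟨a ^ ℓ ^ m, ?_, rfl⟩
    have : ((a : N ⧸ K.1)) ^ ℓ ^ m = 1 := by rw [← hm]; exact pow_card_eq_one'
    have h3 : ((a ^ ℓ ^ m : N) : N ⧸ K.1) = 1 := by
      rw [show ((a ^ ℓ ^ m : N) : N ⧸ K.1) = ((a : N ⧸ K.1)) ^ ℓ ^ m from
        map_pow (QuotientGroup.mk' K.1) a _, this]
    exact (QuotientGroup.eq_one_iff _).mp h3
  refine ⟨⟨L, hLn, hfinL, IsPGroup.iff_card.mp hP⟩, ?_⟩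
  calc L.comap i ≤ J.comap i := Subgroup.comap_mono hLJ
    _ = K.1 := Subgroup.comap_map_eq_self_of_injective hi K.1

theorem LIndex.transition_mk {ℓ : ℕ} {G' : Type*} [Group G'] (K₁ K₂ : LIndex G' ℓ)
    (h : K₁.1 ≤ K₂.1) (g : G') :
    LIndex.transition K₁ K₂ h (QuotientGroup.mk g) = QuotientGroup.mk g := by
  haveI := K₁.2.1
  haveI := K₂.2.1
  exact QuotientGroup.map_mk K₁.1 K₂.1 (MonoidHom.id G') _ g

end Helpers

/-- Let `1 → N → G → H → 1` be an exact sequence of finitely generated groups, where `H`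
is a finite `ℓ`-group and the pro-`ℓ` completion `N^ℓ` of `N` has trivial centre.  Then the
induced sequence of pro-`ℓ` completions `1 → N^ℓ → G^ℓ → H^ℓ → 1` is exact. -/
theorem proL_completion_exact (ℓ : ℕ) (hℓ : ℓ.Prime)
    (N G H : Type*) [Group N] [Group G] [Group H]
    (hNfg : Group.FG N) (hGfg : Group.FG G) (hHfg : Group.FG H)
    (i : N →* G) (π : G →* H)
    (hi : Function.Injective i) (hπ : Function.Surjective π)
    (hexact : i.range = π.ker)
    [Finite H] (n : ℕ) (hH : Nat.card H = ℓ ^ n)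
    (hcentre : Subgroup.center (ProL N ℓ) = ⊥) :
    Function.Injective (proLMap hℓ i) ∧
    Function.Surjective (proLMap hℓ π) ∧
    (proLMap hℓ i).range = (proLMap hℓ π).ker := by
  haveI := Fact.mk hℓ
  -- the trivial index of `H`
  let KbotH : LIndex H ℓ := ⟨⊥, inferInstance, inferInstance,
    ⟨n, by rw [Nat.card_congr (QuotientGroup.quotientBot (G := H)).toEquiv]; exact hH⟩⟩
  -- membership in the pullback of the trivial index
  have hKc : ∀ g : G, g ∈ (LIndex.comap hℓ π KbotH).1 ↔ ∃ a : N, i a = g := by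
    intro g
    have h1 : g ∈ (LIndex.comap hℓ π KbotH).1 ↔ π g ∈ (⊥ : Subgroup H) := Iff.rfl
    rw [h1, Subgroup.mem_bot, ← MonoidHom.mem_ker, ← hexact]
    exact Iff.rfl
  refine ⟨?_, ?_, ?_⟩
  · -- injectivity
    refine (injective_iff_map_eq_one _).mpr ?_
    intro x hx
    refine Subtype.ext (funext fun K => ?_)
    show x.1 K = 1
    obtain ⟨K', hK'⟩ := exists_lindex_comap_le hℓ i π hi hπ hexact hH K
    haveI := K.2.1
    haveI := K'.2.1
    haveI := (LIndex.comap hℓ i K').2.1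
    have hcomp : QuotientGroup.map (LIndex.comap hℓ i K').1 K'.1 i le_rfl
        (x.1 (LIndex.comap hℓ i K')) = 1 := congrFun (congrArg Subtype.val hx) K'
    obtain ⟨a, ha⟩ := QuotientGroup.mk_surjective (x.1 (LIndex.comap hℓ i K'))
    erw [← ha, QuotientGroup.map_mk] at hcomp
    have hia : a ∈ K'.1.comap i := Subgroup.mem_comap.mpr ((QuotientGroup.eq_one_iff _).mp hcomp)
    have hxK : x.1 K = QuotientGroup.mk a := by
      erw [← x.2 (LIndex.comap hℓ i K') K hK', ← ha, LIndex.transition_mk]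
    rw [hxK, QuotientGroup.eq_one_iff]
    exact hK' hia
  · -- surjectivity
    intro x
    obtain ⟨h₀, hh₀⟩ := QuotientGroup.mk_surjective (x.1 KbotH)
    obtain ⟨g, hg⟩ := hπ h₀
    refine ⟨⟨fun K' => QuotientGroup.mk g, fun K₁ K₂ h => LIndex.transition_mk K₁ K₂ h g⟩, ?_⟩
    refine Subtype.ext (funext fun K => ?_)
    haveI := K.2.1
    haveI := (LIndex.comap hℓ π K).2.1
    show QuotientGroup.map (LIndex.comap hℓ π K).1 K.1 π le_rfl (QuotientGroup.mk g) = x.1 K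
    erw [QuotientGroup.map_mk, hg, ← x.2 KbotH K bot_le, ← hh₀, LIndex.transition_mk]
  · -- exactness
    ext x
    simp only [MonoidHom.mem_range, MonoidHom.mem_ker]
    constructor
    · rintro ⟨y, rfl⟩
      refine Subtype.ext (funext fun K => ?_)
      haveI := K.2.1
      haveI := (LIndex.comap hℓ π K).2.1
      haveI := (LIndex.comap hℓ i (LIndex.comap hℓ π K)).2.1
      show QuotientGroup.map (LIndex.comap hℓ π K).1 K.1 π le_rfl
        ((proLMap hℓ i y).1 (LIndex.comap hℓ π K)) = 1
      obtain ⟨a, ha⟩ :=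
        QuotientGroup.mk_surjective (y.1 (LIndex.comap hℓ i (LIndex.comap hℓ π K)))
      have h2 : (proLMap hℓ i y).1 (LIndex.comap hℓ π K) = QuotientGroup.mk (i a) := by
        show QuotientGroup.map (LIndex.comap hℓ i (LIndex.comap hℓ π K)).1
          (LIndex.comap hℓ π K).1 i le_rfl
          (y.1 (LIndex.comap hℓ i (LIndex.comap hℓ π K))) = QuotientGroup.mk (i a)
        erw [← ha, QuotientGroup.map_mk]
      erw [h2, QuotientGroup.map_mk, QuotientGroup.eq_one_iff]
      have : π (i a) = 1 := MonoidHom.mem_ker.mp (hexact ▸ ⟨a, rfl⟩)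
      rw [this]
      exact K.1.one_mem
    · intro hx
      -- every component of `x` lies in the image of `N`
      have hmem : ∀ K' : LIndex G ℓ, ∃ a : N, x.1 K' = QuotientGroup.mk (i a) := by
        intro K'
        haveI := K'.2.1
        haveI := (LIndex.comap hℓ π KbotH).2.1
        -- the component at the pullback of the trivial index
        have hcomp : QuotientGroup.map (LIndex.comap hℓ π KbotH).1 KbotH.1 π le_rfl
            (x.1 (LIndex.comap hℓ π KbotH)) = 1 := congrFun (congrArg Subtype.val hx) KbotH
        obtain ⟨g₀, hg₀⟩ := QuotientGroup.mk_surjective (x.1 (LIndex.comap hℓ π KbotH))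
        erw [← hg₀, QuotientGroup.map_mk] at hcomp
        have hg₀mem : g₀ ∈ (LIndex.comap hℓ π KbotH).1 := Subgroup.mem_comap.mpr
          ((QuotientGroup.eq_one_iff (N := (⊥ : Subgroup H)) (π g₀)).mp hcomp)
        obtain ⟨a₀, ha₀⟩ := (hKc g₀).mp hg₀mem
        -- refine by the intersection
        obtain ⟨g'', hg''⟩ :=
          QuotientGroup.mk_surjective (x.1 (LIndex.inf hℓ K' (LIndex.comap hℓ π KbotH)))
        have t1 : x.1 (LIndex.comap hℓ π KbotH) = QuotientGroup.mk g'' := by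
          erw [← x.2 (LIndex.inf hℓ K' (LIndex.comap hℓ π KbotH)) (LIndex.comap hℓ π KbotH)
            inf_le_right, ← hg'', LIndex.transition_mk]
        have hdiff : g''⁻¹ * g₀ ∈ (LIndex.comap hℓ π KbotH).1 :=
          QuotientGroup.eq.mp (t1.symm.trans hg₀.symm)
        obtain ⟨a₁, ha₁⟩ := (hKc _).mp hdiff
        refine ⟨a₀ * a₁⁻¹, ?_⟩
        have hgeq : g'' = i (a₀ * a₁⁻¹) := by
          rw [map_mul, map_inv, ha₀, ha₁]
          group
        erw [← x.2 (LIndex.inf hℓ K' (LIndex.comap hℓ π KbotH)) K' inf_le_left, ← hg'',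
          LIndex.transition_mk, hgeq]
      choose F hF using fun K => exists_lindex_comap_le hℓ i π hi hπ hexact hH K
      choose lift hlift using hmem
      -- independence of the chosen representatives
      have hind : ∀ (K : LIndex N ℓ) (Ka Kb : LIndex G ℓ),
          Ka.1.comap i ≤ K.1 → Kb.1.comap i ≤ K.1 → ∀ a₁ a₂ : N,
          x.1 Ka = QuotientGroup.mk (i a₁) → x.1 Kb = QuotientGroup.mk (i a₂) →
          (QuotientGroup.mk a₁ : N ⧸ K.1) = QuotientGroup.mk a₂ := by
        intro K Ka Kb hKa hKb a₁ a₂ h1 h2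
        haveI := K.2.1
        -- common refinement
        have h3 := hlift (LIndex.inf hℓ Ka Kb)
        have ta : x.1 Ka = QuotientGroup.mk (i (lift (LIndex.inf hℓ Ka Kb))) := by
          erw [← x.2 (LIndex.inf hℓ Ka Kb) Ka inf_le_left, h3, LIndex.transition_mk]
        have tb : x.1 Kb = QuotientGroup.mk (i (lift (LIndex.inf hℓ Ka Kb))) := by
          erw [← x.2 (LIndex.inf hℓ Ka Kb) Kb inf_le_right, h3, LIndex.transition_mk]
        have da : a₁⁻¹ * lift (LIndex.inf hℓ Ka Kb) ∈ K.1 := by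
          refine hKa (Subgroup.mem_comap.mpr ?_)
          have := QuotientGroup.eq.mp (h1.symm.trans ta)
          rwa [map_mul, map_inv]
        have db : a₂⁻¹ * lift (LIndex.inf hℓ Ka Kb) ∈ K.1 := by
          refine hKb (Subgroup.mem_comap.mpr ?_)
          have := QuotientGroup.eq.mp (h2.symm.trans tb)
          rwa [map_mul, map_inv]
        exact (QuotientGroup.eq.mpr da).trans (QuotientGroup.eq.mpr db).symm
      refine ⟨⟨fun K => QuotientGroup.mk (lift (F K)), ?_⟩, ?_⟩
      · intro K₁ K₂ hle
        show LIndex.transition K₁ K₂ hle (QuotientGroup.mk (lift (F K₁)))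
          = QuotientGroup.mk (lift (F K₂))
        rw [LIndex.transition_mk]
        exact hind K₂ (F K₁) (F K₂) ((hF K₁).trans hle) (hF K₂) _ _
          (hlift (F K₁)) (hlift (F K₂))
      · refine Subtype.ext (funext fun K' => ?_)
        haveI := K'.2.1
        haveI := (LIndex.comap hℓ i K').2.1
        show QuotientGroup.map (LIndex.comap hℓ i K').1 K'.1 i le_rfl
          (QuotientGroup.mk (lift (F (LIndex.comap hℓ i K')))) = x.1 K'
        erw [QuotientGroup.map_mk]
        -- compare with the canonical representative on a common refinement
        have h3 := hlift (LIndex.inf hℓ K' (F (LIndex.comap hℓ i K')))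
        have ta : x.1 (F (LIndex.comap hℓ i K')) =
            QuotientGroup.mk (i (lift (LIndex.inf hℓ K' (F (LIndex.comap hℓ i K'))))) := by
          erw [← x.2 (LIndex.inf hℓ K' (F (LIndex.comap hℓ i K')))
            (F (LIndex.comap hℓ i K')) inf_le_right, h3, LIndex.transition_mk]
        have tb : x.1 K' =
            QuotientGroup.mk (i (lift (LIndex.inf hℓ K' (F (LIndex.comap hℓ i K'))))) := by
          erw [← x.2 (LIndex.inf hℓ K' (F (LIndex.comap hℓ i K'))) K' inf_le_left, h3, LIndex.transition_mk]
        have hd : (lift (F (LIndex.comap hℓ i K')))⁻¹ *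
            lift (LIndex.inf hℓ K' (F (LIndex.comap hℓ i K'))) ∈ K'.1.comap i := by
          refine hF (LIndex.comap hℓ i K') (Subgroup.mem_comap.mpr ?_)
          have := QuotientGroup.eq.mp ((hlift (F (LIndex.comap hℓ i K'))).symm.trans ta)
          rwa [map_mul, map_inv]
        rw [tb]
        refine (QuotientGroup.eq.mpr ?_)
        have := Subgroup.mem_comap.mp hd
        rwa [map_mul, map_inv] at this
end

section
/- Let g ≥ 2 and let x ∈ M_{2g}(ℚ̄) be the nilpotent Jordan block matrix with ones on the superdiagonal and zeros elsewhere. Define an involution † on M_{2g}(ℚ̄) by viewing a matrix as a g×g block matrix of 2×2 blocks (a b; c d), and setting the (i,j) block of x† equal to the adjugate (d −b; −c a) of the (j,i) block of x. Then x and x† generate M_{2g}(ℚ̄) as a non-unital ℚ̄-subalgebra (ℚ̄-rng). -/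
open Matrix

variable {K : Type*} [Field K]

/-- The nilpotent Jordan block: ones on the superdiagonal, zeros elsewhere. -/
def superdiag (m : ℕ) : Matrix (Fin m) (Fin m) K :=
  Matrix.of fun p q => if (p : ℕ) + 1 = (q : ℕ) then 1 else 0

/-- The involution `†` on `M_{2g}(K)`: view a matrix as a `g × g` array of `2 × 2` blocks,
transpose the array of blocks, and replace each block `(a b; c d)` by its adjugate
`(d -b; -c a)`.  Writing indices as `p = 2i + a`, `q = 2j + b` (so `p` lies in block row `i`
with inner index `a`, etc.), the `(p, q)` entry of `M†` is `M_{2j + (1-a), 2i + (1-b)}` if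
`a = b`, and `-M_{2j + a, 2i + b}` otherwise. -/
def blockDagger (g : ℕ) (M : Matrix (Fin (2 * g)) (Fin (2 * g)) K) :
    Matrix (Fin (2 * g)) (Fin (2 * g)) K :=
  Matrix.of fun p q =>
    if h : 0 < g then
      (if (p : ℕ) % 2 = (q : ℕ) % 2 then
        M ⟨2 * ((q : ℕ) / 2) + (1 - (p : ℕ) % 2), by omega⟩
          ⟨2 * ((p : ℕ) / 2) + (1 - (q : ℕ) % 2), by omega⟩
      else
        - M ⟨2 * ((q : ℕ) / 2) + (p : ℕ) % 2, by omega⟩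
            ⟨2 * ((p : ℕ) / 2) + (q : ℕ) % 2, by omega⟩)
    else 0

section AuxGen

variable {n : ℕ}

lemma mulRow (A B : Matrix (Fin n) (Fin n) K) (p q k₀ : Fin n)
    (h : ∀ k : Fin n, k ≠ k₀ → A p k = 0) :
    (A * B) p q = A p k₀ * B k₀ q := by
  rw [Matrix.mul_apply]
  refine Finset.sum_eq_single_of_mem k₀ (Finset.mem_univ _) fun k _ hk => ?_
  rw [h k hk, zero_mul]

lemma mulRowZero (A B : Matrix (Fin n) (Fin n) K) (p q : Fin n)
    (h : ∀ k : Fin n, A p k = 0) : (A * B) p q = 0 := by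
  rw [Matrix.mul_apply]
  exact Finset.sum_eq_zero fun k _ => by rw [h k, zero_mul]

lemma mulCol (A B : Matrix (Fin n) (Fin n) K) (p q k₀ : Fin n)
    (h : ∀ k : Fin n, k ≠ k₀ → B k q = 0) :
    (A * B) p q = A p k₀ * B k₀ q := by
  rw [Matrix.mul_apply]
  refine Finset.sum_eq_single_of_mem k₀ (Finset.mem_univ _) fun k _ hk => ?_
  rw [h k hk, mul_zero]

lemma superdiag_apply (p q : Fin n) :
    superdiag n p q = if (p : ℕ) + 1 = (q : ℕ) then (1 : K) else 0 := rfl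

lemma dagger_apply (g : ℕ) (hg : 1 ≤ g) (p q : Fin (2 * g)) :
    blockDagger g (superdiag (2 * g)) p q =
      if ((p : ℕ) + 1 = (q : ℕ) ∧ (p : ℕ) % 2 = 0) ∨
          ((p : ℕ) = (q : ℕ) + 3 ∧ (p : ℕ) % 2 = 1) then (-1 : K) else 0 := by
  have hp := p.isLt; have hq := q.isLt
  simp only [blockDagger, superdiag, Matrix.of_apply, dif_pos (by omega : 0 < g)]
  split_ifs <;> first | rfl | (exfalso; omega) | norm_num

end AuxGen


/-- Let `g ≥ 2` and let `x ∈ M_{2g}(ℚ̄)` be the nilpotent Jordan block matrix with ones on the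
superdiagonal.  Then `x` and `x†` generate `M_{2g}(ℚ̄)` as a non-unital `ℚ̄`-subalgebra. -/
theorem superdiag_and_dagger_generate (K : Type*) [Field K] [IsAlgClosed K] [CharZero K]
    (g : ℕ) (hg : 2 ≤ g) :
    NonUnitalAlgebra.adjoin K
      ({superdiag (2 * g), blockDagger g (superdiag (2 * g))} :
        Set (Matrix (Fin (2 * g)) (Fin (2 * g)) K)) = ⊤ := by
  set n := 2 * g with hn
  have hn4 : 4 ≤ n := by omega
  set x : Matrix (Fin n) (Fin n) K := superdiag n with hxdef
  set y : Matrix (Fin n) (Fin n) K := blockDagger g (superdiag (2 * g)) with hydef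
  set S : NonUnitalSubalgebra K (Matrix (Fin n) (Fin n) K) :=
    NonUnitalAlgebra.adjoin K {x, y} with hSdef
  have hxS : x ∈ S := NonUnitalAlgebra.subset_adjoin K (Set.mem_insert _ _)
  have hyS : y ∈ S := NonUnitalAlgebra.subset_adjoin K (Set.mem_insert_of_mem _ rfl)
  have hx : ∀ p q : Fin n, x p q = if (p : ℕ) + 1 = (q : ℕ) then (1 : K) else 0 :=
    fun p q => rfl
  have hy : ∀ p q : Fin n, y p q =
      if ((p : ℕ) + 1 = (q : ℕ) ∧ (p : ℕ) % 2 = 0) ∨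
        ((p : ℕ) = (q : ℕ) + 3 ∧ (p : ℕ) % 2 = 1) then (-1 : K) else 0 :=
    fun p q => dagger_apply g (by omega) p q
  -- a helper: rows of x
  have hxrow : ∀ (p : Fin n) (h : (p : ℕ) + 1 < n) (k : Fin n),
      k ≠ ⟨(p : ℕ) + 1, h⟩ → x p k = 0 := by
    intro p h k hk
    rw [hx]
    exact if_neg fun hc => hk (Fin.ext hc.symm)
  have hxrowz : ∀ (p : Fin n), ¬ ((p : ℕ) + 1 < n) → ∀ k : Fin n, x p k = 0 := by
    intro p h k
    rw [hx]
    exact if_neg (by have := k.isLt; omega)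
  -- x * y
  have hxy : ∀ p q : Fin n, (x * y) p q =
      if ((q : ℕ) = (p : ℕ) + 2 ∧ (p : ℕ) % 2 = 1) ∨
        ((p : ℕ) = (q : ℕ) + 2 ∧ (p : ℕ) % 2 = 0) then (-1 : K) else 0 := by
    intro p q
    have hp := p.isLt; have hq := q.isLt
    by_cases h : (p : ℕ) + 1 < n
    · rw [mulRow x y p q ⟨(p : ℕ) + 1, h⟩ (hxrow p h)]
      rw [hx, hy]
      simp only [Fin.val_mk, true_and, and_true, false_and, and_false, or_false, false_or]
      split_ifs <;> first | rfl | (exfalso; omega) | norm_num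
    · rw [mulRowZero x y p q (hxrowz p h)]
      rw [if_neg]; omega
  -- y * x
  have hyx : ∀ p q : Fin n, (y * x) p q =
      if ((q : ℕ) = (p : ℕ) + 2 ∧ (p : ℕ) % 2 = 0) ∨
        ((p : ℕ) = (q : ℕ) + 2 ∧ (p : ℕ) % 2 = 1) then (-1 : K) else 0 := by
    intro p q
    have hp := p.isLt; have hq := q.isLt
    by_cases hpe : (p : ℕ) % 2 = 0
    · have h1 : (p : ℕ) + 1 < n := by omega
      rw [mulRow y x p q ⟨(p : ℕ) + 1, h1⟩ (fun k hk => by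
        rw [hy]
        refine if_neg fun hc => hk (Fin.ext (show (k : ℕ) = (p : ℕ) + 1 by omega)))]
      rw [hy, hx]
      simp only [Fin.val_mk, true_and, and_true, false_and, and_false, or_false, false_or]
      split_ifs <;> first | rfl | (exfalso; omega) | norm_num
    · by_cases h3 : 3 ≤ (p : ℕ)
      · have h1 : (p : ℕ) - 3 < n := by omega
        rw [mulRow y x p q ⟨(p : ℕ) - 3, h1⟩ (fun k hk => by
          rw [hy]
          refine if_neg fun hc => hk (Fin.ext (show (k : ℕ) = (p : ℕ) - 3 by omega)))]
        rw [hy, hx]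
        simp only [Fin.val_mk, true_and, and_true, false_and, and_false, or_false, false_or]
        split_ifs <;> first | rfl | (exfalso; omega) | norm_num
      · rw [mulRowZero y x p q (fun k => by
          rw [hy]
          refine if_neg ?_
          have := k.isLt; omega)]
        rw [if_neg]; omega
  -- x * x
  have hxx : ∀ p q : Fin n, (x * x) p q =
      if (q : ℕ) = (p : ℕ) + 2 then (1 : K) else 0 := by
    intro p q
    have hp := p.isLt; have hq := q.isLt
    by_cases h : (p : ℕ) + 1 < n
    · rw [mulRow x x p q ⟨(p : ℕ) + 1, h⟩ (hxrow p h)]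
      rw [hx, hx]
      simp only [Fin.val_mk, true_and, and_true, false_and, and_false, or_false, false_or]
      split_ifs <;> first | rfl | (exfalso; omega) | norm_num
    · rw [mulRowZero x x p q (hxrowz p h)]
      rw [if_neg]; omega
  -- T = -(x*y + y*x + x*x) : the sub-sub-diagonal
  set T : Matrix (Fin n) (Fin n) K :=
    Matrix.of (fun p q => if (p : ℕ) = (q : ℕ) + 2 then (1 : K) else 0) with hTdef
  have hT : ∀ p q : Fin n, T p q = if (p : ℕ) = (q : ℕ) + 2 then (1 : K) else 0 :=
    fun p q => rfl
  have hTS : T ∈ S := by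
    have : T = -(x * y + y * x + x * x) := by
      ext p q
      have hp := p.isLt; have hq := q.isLt
      simp only [Matrix.neg_apply, Matrix.add_apply, hxy p q, hyx p q, hxx p q, hT p q]
      split_ifs <;> first | rfl | (exfalso; omega) | norm_num
    rw [this]
    exact neg_mem (add_mem (add_mem (mul_mem hxS hyS) (mul_mem hyS hxS)) (mul_mem hxS hxS))
  -- s = x * T
  have hs : ∀ p q : Fin n, (x * T) p q =
      if (p : ℕ) = (q : ℕ) + 1 ∧ (p : ℕ) + 1 < n then (1 : K) else 0 := by
    intro p q
    have hp := p.isLt; have hq := q.isLt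
    by_cases h : (p : ℕ) + 1 < n
    · rw [mulRow x T p q ⟨(p : ℕ) + 1, h⟩ (hxrow p h)]
      rw [hx, hT]
      simp only [Fin.val_mk, true_and, and_true, false_and, and_false, or_false, false_or]
      split_ifs <;> first | rfl | (exfalso; omega) | norm_num
    · rw [mulRowZero x T p q (hxrowz p h)]
      rw [if_neg]; omega
  -- t = T * x
  have ht : ∀ p q : Fin n, (T * x) p q =
      if (p : ℕ) = (q : ℕ) + 1 ∧ 2 ≤ (p : ℕ) then (1 : K) else 0 := by
    intro p q
    have hp := p.isLt; have hq := q.isLt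
    by_cases h : 2 ≤ (p : ℕ)
    · have h1 : (p : ℕ) - 2 < n := by omega
      rw [mulRow T x p q ⟨(p : ℕ) - 2, h1⟩ (fun k hk => by
        rw [hT]
        refine if_neg fun hc => hk (Fin.ext (show (k : ℕ) = (p : ℕ) - 2 by omega)))]
      rw [hT, hx]
      simp only [Fin.val_mk, true_and, and_true, false_and, and_false, or_false, false_or]
      split_ifs <;> first | rfl | (exfalso; omega) | norm_num
    · rw [mulRowZero T x p q (fun k => by
        rw [hT]
        refine if_neg ?_
        have := k.isLt; omega)]
      rw [if_neg]; omega
  -- d = x*T - T*x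
  have hd : ∀ p q : Fin n, (x * T - T * x) p q =
      (if (p : ℕ) = 1 ∧ (q : ℕ) = 0 then (1 : K) else 0) -
      (if (p : ℕ) = n - 1 ∧ (q : ℕ) = n - 2 then (1 : K) else 0) := by
    intro p q
    have hp := p.isLt; have hq := q.isLt
    rw [Matrix.sub_apply, hs p q, ht p q]
    split_ifs <;> first | rfl | (exfalso; omega) | norm_num
  -- e = x * (x*T - T*x) = E₀₀ - E_{n-2,n-2}
  have he : ∀ p q : Fin n, (x * (x * T - T * x)) p q =
      (if (p : ℕ) = 0 ∧ (q : ℕ) = 0 then (1 : K) else 0) -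
      (if (p : ℕ) = n - 2 ∧ (q : ℕ) = n - 2 then (1 : K) else 0) := by
    intro p q
    have hp := p.isLt; have hq := q.isLt
    by_cases h : (p : ℕ) + 1 < n
    · rw [mulRow x (x * T - T * x) p q ⟨(p : ℕ) + 1, h⟩ (hxrow p h)]
      rw [hx, hd]
      simp only [Fin.val_mk, true_and, and_true, false_and, and_false, or_false, false_or]
      split_ifs <;> first | rfl | (exfalso; omega) | norm_num
    · rw [mulRowZero x (x * T - T * x) p q (hxrowz p h)]
      rw [if_neg (by omega), if_neg (by omega), sub_zero]
  set e : Matrix (Fin n) (Fin n) K := x * (x * T - T * x) with hedef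
  have heS : e ∈ S := mul_mem hxS (sub_mem (mul_mem hxS hTS) (mul_mem hTS hxS))
  -- e * e + e = 2 E₀₀
  have hee : ∀ p q : Fin n, (e * e + e) p q =
      if (p : ℕ) = 0 ∧ (q : ℕ) = 0 then (2 : K) else 0 := by
    intro p q
    have hp := p.isLt; have hq := q.isLt
    rw [Matrix.add_apply]
    have heval : (e * e) p q = e p p * e p q := by
      refine mulRow e e p q p (fun k hk => ?_)
      rw [he p k]
      rw [if_neg (fun hc => hk (Fin.ext (show (k : ℕ) = (p : ℕ) by omega))),
        if_neg (fun hc => hk (Fin.ext (show (k : ℕ) = (p : ℕ) by omega))), sub_zero]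
    rw [heval, he p p, he p q]
    split_ifs <;> first | rfl | (exfalso; omega) | norm_num
  -- E₀₀ ∈ S
  have hE00S : single (⟨0, by omega⟩ : Fin n) (⟨0, by omega⟩ : Fin n) (1 : K) ∈ S := by
    have key : ((2 : K)⁻¹) • (e * e + e) =
        single (⟨0, by omega⟩ : Fin n) (⟨0, by omega⟩ : Fin n) (1 : K) := by
      ext p q
      rw [Matrix.smul_apply, hee p q, single]
      simp only [Matrix.of_apply, Fin.ext_iff, Fin.val_mk, smul_ite, smul_zero, smul_eq_mul]
      split_ifs <;> first | (exfalso; omega) | norm_num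
    rw [← key]
    exact SMulMemClass.smul_mem _ (add_mem (mul_mem heS heS) heS)
  -- right multiplication by x shifts the column of a matrix unit
  have hErx : ∀ (p q : ℕ) (hp : p < n) (hq : q + 1 < n),
      (single (⟨p, hp⟩ : Fin n) (⟨q, by omega⟩ : Fin n) (1 : K)) * x =
      single (⟨p, hp⟩ : Fin n) (⟨q + 1, hq⟩ : Fin n) (1 : K) := by
    intro p q hp hq
    ext p' q'
    have hq' := q'.isLt; have hp' := p'.isLt
    rw [mulRow _ x p' q' ⟨q, by omega⟩ (fun k hk =>
      Matrix.single_apply_of_ne _ _ _ _ _ (fun hc => hk hc.2.symm))]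
    rw [hx, single, single]
    simp only [Matrix.of_apply, Fin.ext_iff, Fin.val_mk, true_and, and_true,
      false_and, and_false, or_false, false_or]
    split_ifs <;> first | rfl | (exfalso; omega) | norm_num
  -- left multiplication by s = x*T shifts the row (below the top, above the bottom)
  have hEls : ∀ (p q : ℕ) (hp : p + 2 < n) (hq : q < n),
      (x * T) * (single (⟨p, by omega⟩ : Fin n) (⟨q, hq⟩ : Fin n) (1 : K)) =
      single (⟨p + 1, by omega⟩ : Fin n) (⟨q, hq⟩ : Fin n) (1 : K) := by
    intro p q hp hq
    ext p' q'
    have hq' := q'.isLt; have hp' := p'.isLt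
    rw [mulCol _ _ p' q' ⟨p, by omega⟩ (fun k hk =>
      Matrix.single_apply_of_ne _ _ _ _ _ (fun hc => hk hc.1.symm))]
    rw [hs, single, single]
    simp only [Matrix.of_apply, Fin.ext_iff, Fin.val_mk, true_and, and_true,
      false_and, and_false, or_false, false_or]
    split_ifs <;> first | rfl | (exfalso; omega) | norm_num
  -- left multiplication by t = T*x shifts the row at the bottom
  have hElt : ∀ (p q : ℕ) (hp : p + 2 = n) (hq : q < n),
      (T * x) * (single (⟨p, by omega⟩ : Fin n) (⟨q, hq⟩ : Fin n) (1 : K)) =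
      single (⟨p + 1, by omega⟩ : Fin n) (⟨q, hq⟩ : Fin n) (1 : K) := by
    intro p q hp hq
    ext p' q'
    have hq' := q'.isLt; have hp' := p'.isLt
    rw [mulCol _ _ p' q' ⟨p, by omega⟩ (fun k hk =>
      Matrix.single_apply_of_ne _ _ _ _ _ (fun hc => hk hc.1.symm))]
    rw [ht, single, single]
    simp only [Matrix.of_apply, Fin.ext_iff, Fin.val_mk, true_and, and_true,
      false_and, and_false, or_false, false_or]
    split_ifs <;> first | rfl | (exfalso; omega) | norm_num
  -- every matrix unit lies in S
  have hrow0 : ∀ (q : ℕ) (hq : q < n),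
      single (⟨0, by omega⟩ : Fin n) (⟨q, hq⟩ : Fin n) (1 : K) ∈ S := by
    intro q
    induction q with
    | zero => intro hq; exact hE00S
    | succ q ih =>
      intro hq
      rw [← hErx 0 q (by omega) hq]
      exact mul_mem (ih (by omega)) hxS
  have hall : ∀ (p : ℕ) (hp : p < n) (q : ℕ) (hq : q < n),
      single (⟨p, hp⟩ : Fin n) (⟨q, hq⟩ : Fin n) (1 : K) ∈ S := by
    intro p
    induction p with
    | zero => intro hp q hq; exact hrow0 q hq
    | succ p ih =>
      intro hp q hq
      by_cases h : p + 2 < n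
      · rw [← hEls p q h hq]
        exact mul_mem (mul_mem hxS hTS) (ih (by omega) q hq)
      · have hpn : p + 2 = n := by omega
        rw [← hElt p q hpn hq]
        exact mul_mem (mul_mem hTS hxS) (ih (by omega) q hq)
  -- conclude
  refine (@eq_top_iff _ _ inferInstance S).mpr fun M _ => ?_
  rw [matrix_eq_sum_single M]
  refine sum_mem (fun p _ => sum_mem (fun q _ => ?_))
  have hsm : single p q (M p q) = (M p q) • single p q (1 : K) := by
    rw [smul_single, smul_eq_mul, mul_one]
  rw [hsm]
  have hmem := hall (p : ℕ) p.isLt (q : ℕ) q.isLt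
  simp only [Fin.eta] at hmem
  exact SMulMemClass.smul_mem _ hmem
end
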